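/- arXiv:2011.01050 — 2 statements merged into one kernel-verified Lean document; each statement's English description precedes it below -/
import Mathlib

section
/- Let k be a finite field of cardinality q^n and let f ∈ k[X] be a polynomial with deg f ≥ 1. Then deg(f̄) ≤ w(f) ≤ (q−1)(⌊log_q(deg f)⌋ + 1). -/
open MvPolynomial

/-- The reduced exponent `e'` determined by `X^{e'} = X^e mod (X^{q^n} - X)`:
`e' = e` if `e < q^n`, and otherwise `e'` is the representative of `e` modulo `q^n - 1`
lying in `{1, …, q^n - 1}`. -/
def reduceExp (q n e : ℕ) : ℕ :=
  if e < q ^ n then e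
  else if (q ^ n - 1) ∣ e then q ^ n - 1 else e % (q ^ n - 1)

/-- The exponent vector of `overline{X^e}`: the base-`q` digits of the reduced exponent. -/
noncomputable def expVec (q n e : ℕ) : Fin n →₀ ℕ :=
  Finsupp.equivFunOnFinite.symm fun j : Fin n => reduceExp q n e / q ^ (j : ℕ) % q

/-- The fake Weil descent map `f ↦ f̄` from `k[X]` to `k[X_0, …, X_{n-1}]`, the `k`-linear
extension of `X^e ↦ overline{X^e} = X_0^{e'_0} ⋯ X_{n-1}^{e'_{n-1}}`. -/
noncomputable def fakeWeil {k : Type*} [Field k] (q n : ℕ) (f : Polynomial k) :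
    MvPolynomial (Fin n) k :=
  f.sum fun e c => MvPolynomial.monomial (expVec q n e) c

/-- The fake Weil descent system `F̄_f` of a finite set `F ⊆ k[X]`:
`{f̄ : f ∈ F} ∪ {X_0^q - X_1, …, X_{n-2}^q - X_{n-1}, X_{n-1}^q - X_0}`. -/
noncomputable def fakeWeilSystem {k : Type*} [Field k] [DecidableEq k] (q n : ℕ) [NeZero n]
    (F : Finset (Polynomial k)) : Finset (MvPolynomial (Fin n) k) :=
  F.image (fakeWeil q n) ∪
    Finset.image (fun i : Fin n => X i ^ q - X (i + 1)) Finset.univ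

/-- The weight of a natural number: its digit sum in base `q`. -/
def wNat (q e : ℕ) : ℕ := (Nat.digits q e).sum

/-- The weight of a univariate polynomial: the maximal weight of an exponent appearing in it. -/
def wPoly {k : Type*} [Field k] (q : ℕ) (f : Polynomial k) : ℕ :=
  f.support.sup fun e => wNat q e

lemma wNat_eq {q : ℕ} (hq : 1 < q) (m : ℕ) :
    wNat q m = m % q + wNat q (m / q) := by
  rcases Nat.eq_zero_or_pos m with rfl | hm
  · simp [wNat]
  · rw [wNat, Nat.digits_def' hq hm, List.sum_cons]; rfl

lemma wNat_succ_le {q : ℕ} (hq : 1 < q) (m : ℕ) :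
    wNat q (m + 1) ≤ wNat q m + 1 := by
  induction m using Nat.strong_induction_on with
  | _ m IH =>
    have hq0 : 0 < q := by omega
    have hdm := Nat.div_add_mod m q
    by_cases hd : q ∣ m + 1
    · have hm : 1 ≤ m := by
        have := Nat.le_of_dvd (by omega) hd
        omega
      have hmod : (m + 1) % q = 0 := Nat.dvd_iff_mod_eq_zero.mp hd
      have e2 : (m + 1) / q = m / q + 1 := Nat.succ_div_of_dvd hd
      have hstep := IH (m / q) (Nat.div_lt_self (by omega) hq)
      rw [wNat_eq hq (m + 1), hmod, e2, wNat_eq hq m]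
      omega
    · have hmlt : m % q < q := Nat.mod_lt _ hq0
      have hne : m % q + 1 < q := by
        rcases Nat.lt_or_ge (m % q + 1) q with h | h
        · exact h
        · exfalso; apply hd
          exact ⟨m / q + 1, by rw [Nat.mul_add, Nat.mul_one]; omega⟩
      have e1 : (m + 1) % q = m % q + 1 := by
        rw [show m + 1 = m % q + 1 + q * (m / q) from by omega,
          Nat.add_mul_mod_self_left, Nat.mod_eq_of_lt hne]
      have e2 : (m + 1) / q = m / q := Nat.succ_div_of_not_dvd hd
      rw [wNat_eq hq (m + 1), wNat_eq hq m, e1, e2]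
      omega

lemma wNat_succ_le' {q : ℕ} (hq : 1 < q) (m : ℕ) :
    wNat q (m + 1) ≤ wNat q m + 1 := wNat_succ_le hq m

lemma wNat_add_le {q : ℕ} (hq : 1 < q) (a b : ℕ) :
    wNat q (a + b) ≤ wNat q a + wNat q b := by
  have hq0 : 0 < q := by omega
  have key : ∀ s a b, a + b ≤ s → wNat q (a + b) ≤ wNat q a + wNat q b := by
    intro s
    induction s using Nat.strong_induction_on with
    | _ s IH =>
      intro a b hab
      rcases Nat.eq_zero_or_pos a with rfl | ha
      · simp [wNat]
      rcases Nat.eq_zero_or_pos b with rfl | hb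
      · simp [wNat]
      have hs : 0 < s := by omega
      have hIH : wNat q (a / q + b / q) ≤ wNat q (a / q) + wNat q (b / q) := by
        refine IH (a / q + b / q) ?_ _ _ le_rfl
        have h1 : a / q < a := Nat.div_lt_self ha hq
        have h2 : b / q ≤ b := Nat.div_le_self b q
        omega
      have hdiv := Nat.add_div (a := a) (b := b) hq0
      have hmod : (a + b) % q = (a % q + b % q) % q := Nat.add_mod a b q
      have ham : a % q < q := Nat.mod_lt _ hq0
      have hbm : b % q < q := Nat.mod_lt _ hq0
      rw [wNat_eq hq (a + b), wNat_eq hq a, wNat_eq hq b]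
      by_cases hc : q ≤ a % q + b % q
      · rw [if_pos hc] at hdiv
        have hm2 : (a % q + b % q) % q = a % q + b % q - q := by
          rw [Nat.mod_eq_sub_mod hc, Nat.mod_eq_of_lt (by omega)]
        have hstep : wNat q (a / q + b / q + 1) ≤ wNat q (a / q + b / q) + 1 :=
          wNat_succ_le hq _
        rw [hdiv, hmod, hm2]
        omega
      · rw [if_neg hc, Nat.add_zero] at hdiv
        have hm2 : (a % q + b % q) % q = a % q + b % q := Nat.mod_eq_of_lt (by omega)
        rw [hdiv, hmod, hm2]
        omega
  exact key (a + b) a b le_rfl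

lemma wNat_add_pow_mul {q : ℕ} (hq : 1 < q) :
    ∀ (n : ℕ) (a b : ℕ), a < q ^ n → wNat q (a + q ^ n * b) = wNat q a + wNat q b := by
  have hq0 : 0 < q := by omega
  intro n
  induction n with
  | zero =>
    intro a b ha
    rw [pow_zero] at ha
    obtain rfl : a = 0 := by omega
    simp [wNat]
  | succ n IH =>
    intro a b ha
    have h1 : (a + q ^ (n + 1) * b) % q = a % q := by
      rw [pow_succ', mul_assoc, Nat.add_mul_mod_self_left]
    have h2 : (a + q ^ (n + 1) * b) / q = a / q + q ^ n * b := by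
      rw [pow_succ', mul_assoc, Nat.add_mul_div_left _ _ hq0]
    have ha' : a / q < q ^ n := by
      rw [Nat.div_lt_iff_lt_mul hq0]
      rw [pow_succ] at ha
      exact ha
    rw [wNat_eq hq (a + q ^ (n + 1) * b), h1, h2, IH _ _ ha', wNat_eq hq a]
    omega

lemma exists_reduced {q n : ℕ} (hq : 1 < q) (hn : 0 < n) (e : ℕ) :
    ∃ m, m < q ^ n ∧ m % (q ^ n - 1) = e % (q ^ n - 1) ∧ (e ≠ 0 → m ≠ 0) ∧
      wNat q m ≤ wNat q e := by
  induction e using Nat.strong_induction_on with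
  | _ e IH =>
    have hq1 : 1 < q ^ n := lt_of_lt_of_le hq (Nat.le_self_pow hn.ne' q)
    by_cases he : e < q ^ n
    · exact ⟨e, he, rfl, fun h => h, le_rfl⟩
    · push_neg at he
      have hdm := Nat.div_add_mod e (q ^ n)
      have hb1 : 1 ≤ e / q ^ n := Nat.div_pos he (by omega)
      have hbig : 2 * (e / q ^ n) ≤ q ^ n * (e / q ^ n) := Nat.mul_le_mul_right _ (by omega)
      have hab : e % q ^ n + e / q ^ n < e := by omega
      have heq : e % q ^ n + q ^ n * (e / q ^ n) = e := by omega
      obtain ⟨m, hm1, hm2, hm3, hm4⟩ := IH (e % q ^ n + e / q ^ n) hab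
      have hcong : (e % q ^ n + e / q ^ n) % (q ^ n - 1) = e % (q ^ n - 1) := by
        have h1 : q ^ n % (q ^ n - 1) = 1 % (q ^ n - 1) := by
          rw [Nat.mod_eq_sub_mod (by omega)]
          congr 1
          omega
        have h2 : (e % q ^ n + e / q ^ n) % (q ^ n - 1) =
            (e % q ^ n + q ^ n * (e / q ^ n)) % (q ^ n - 1) := by
          have hmul : (q ^ n * (e / q ^ n)) % (q ^ n - 1) =
              (1 * (e / q ^ n)) % (q ^ n - 1) := Nat.ModEq.mul_right _ h1
          calc (e % q ^ n + e / q ^ n) % (q ^ n - 1)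
              = (e % q ^ n + 1 * (e / q ^ n)) % (q ^ n - 1) := by rw [one_mul]
            _ = (e % q ^ n + q ^ n * (e / q ^ n)) % (q ^ n - 1) :=
                Nat.ModEq.add_left _ hmul.symm
        rw [h2, heq]
      have hwe : wNat q (e % q ^ n) + wNat q (e / q ^ n) = wNat q e := by
        rw [← wNat_add_pow_mul hq n _ _ (Nat.mod_lt _ (by omega)), heq]
      refine ⟨m, hm1, hm2.trans hcong, fun _ => hm3 (Nat.add_pos_right _ hb1).ne', ?_⟩
      calc wNat q m ≤ wNat q (e % q ^ n + e / q ^ n) := hm4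
        _ ≤ wNat q (e % q ^ n) + wNat q (e / q ^ n) := wNat_add_le hq _ _
        _ = wNat q e := hwe

lemma wNat_reduce_le {q n : ℕ} (hq : 1 < q) (hn : 0 < n) (e : ℕ) :
    wNat q (reduceExp q n e) ≤ wNat q e := by
  have hq1 : 1 < q ^ n := lt_of_lt_of_le hq (Nat.le_self_pow hn.ne' q)
  unfold reduceExp
  split_ifs with h1 h2
  · exact le_rfl
  · push_neg at h1
    obtain ⟨m, hm1, hm2, hm3, hm4⟩ := exists_reduced hq hn e
    have hm0 : m ≠ 0 := hm3 (by omega)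
    have hed : e % (q ^ n - 1) = 0 := Nat.dvd_iff_mod_eq_zero.mp h2
    have hmd : q ^ n - 1 ∣ m := Nat.dvd_of_mod_eq_zero (by omega)
    have hle : q ^ n - 1 ≤ m := Nat.le_of_dvd (Nat.pos_of_ne_zero hm0) hmd
    rw [show q ^ n - 1 = m from by omega]
    exact hm4
  · push_neg at h1
    obtain ⟨m, hm1, hm2, hm3, hm4⟩ := exists_reduced hq hn e
    have hm0 : m ≠ 0 := hm3 (by omega)
    have hne : e % (q ^ n - 1) ≠ 0 := fun h => h2 (Nat.dvd_of_mod_eq_zero h)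
    have hmlt : m < q ^ n - 1 := by
      rcases Nat.lt_or_ge m (q ^ n - 1) with h | h
      · exact h
      · exfalso
        apply hne
        rw [← hm2, show m = q ^ n - 1 from by omega, Nat.mod_self]
    have hmm : m % (q ^ n - 1) = m := Nat.mod_eq_of_lt hmlt
    rw [show e % (q ^ n - 1) = m from by omega]
    exact hm4

lemma sum_digit_le {q : ℕ} (hq : 1 < q) : ∀ (n m : ℕ),
    (∑ j ∈ Finset.range n, m / q ^ j % q) ≤ wNat q m := by
  intro n
  induction n with
  | zero => simp [wNat]
  | succ n IH =>
    intro m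
    rw [Finset.sum_range_succ']
    simp only [pow_zero, Nat.div_one]
    have hcongr : ∀ j ∈ Finset.range n, m / q ^ (j + 1) % q = (m / q) / q ^ j % q := by
      intro j _
      rw [Nat.div_div_eq_div_mul, ← pow_succ']
    rw [Finset.sum_congr rfl hcongr]
    have := IH (m / q)
    rw [wNat_eq hq m]
    omega

lemma wNat_le_bound {q : ℕ} (hq : 1 < q) (m : ℕ) :
    wNat q m ≤ (q - 1) * (Nat.log q m + 1) := by
  rcases Nat.eq_zero_or_pos m with rfl | hm
  · simp [wNat]
  · have hlen : (Nat.digits q m).length = Nat.log q m + 1 := Nat.digits_len q m hq hm.ne'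
    have h := List.sum_le_card_nsmul (Nat.digits q m) (q - 1)
      (fun x hx => by have := Nat.digits_lt_base hq hx; omega)
    rw [hlen, smul_eq_mul, mul_comm] at h
    exact h

/-- `deg f̄ ≤ w(f) ≤ (q-1)(⌊log_q (deg f)⌋ + 1)`. -/
theorem totalDegree_fakeWeil_le {k : Type*} [Field k] [Fintype k]
    (q n : ℕ) (hq : IsPrimePow q) [NeZero n] (hcard : Fintype.card k = q ^ n)
    (f : Polynomial k) (hf : 1 ≤ f.natDegree) :
    (fakeWeil q n f).totalDegree ≤ wPoly q f ∧
    wPoly q f ≤ (q - 1) * (Nat.log q f.natDegree + 1) := by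
  have hq1 : 1 < q := hq.two_le
  have hn : 0 < n := Nat.pos_of_ne_zero (NeZero.ne n)
  constructor
  · rw [fakeWeil, Polynomial.sum_def]
    refine le_trans (MvPolynomial.totalDegree_finset_sum _ _) (Finset.sup_le fun e he => ?_)
    refine le_trans (MvPolynomial.totalDegree_monomial_le _ _) ?_
    have hsum : ((expVec q n e).sum fun _ m => m) =
        ∑ j ∈ Finset.range n, reduceExp q n e / q ^ j % q := by
      rw [Finsupp.sum_fintype (expVec q n e) (fun _ m => m) (fun _ => rfl)]
      simp only [expVec, Finsupp.coe_equivFunOnFinite_symm]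
      exact Fin.sum_univ_eq_sum_range (fun j => reduceExp q n e / q ^ j % q) n
    show ((expVec q n e).sum fun _ m => m) ≤ wPoly q f
    rw [hsum]
    calc (∑ j ∈ Finset.range n, reduceExp q n e / q ^ j % q)
        ≤ wNat q (reduceExp q n e) := sum_digit_le hq1 n _
      _ ≤ wNat q e := wNat_reduce_le hq1 hn e
      _ ≤ wPoly q f := Finset.le_sup he
  · refine Finset.sup_le fun e he => ?_
    have he' : e ≤ f.natDegree :=
      Polynomial.le_natDegree_of_ne_zero (Polynomial.mem_support_iff.mp he)
    calc wNat q e ≤ (q - 1) * (Nat.log q e + 1) := wNat_le_bound hq1 e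
      _ ≤ (q - 1) * (Nat.log q f.natDegree + 1) := by
          exact Nat.mul_le_mul_left _ (by have := Nat.log_mono_right (b := q) he'; omega)
end

section
/- Let k be a finite field of cardinality q^n, let F ⊆ k[X] be finite, and set E = F̄_f ⊆ S. Then for all h_1, h_2 ∈ k[X]: (1) overline{h_1 + h_2} − (overline{h_1} + overline{h_2}) ∈ V_{E, max{deg(overline{h_1}), deg(overline{h_2})}}; and (2) overline{h_1 h_2} − overline{h_1}·overline{h_2} ∈ V_{E, deg(overline{h_1}) + deg(overline{h_2})}. -/
open MvPolynomial

/-- `V_{E,d}`: the smallest `k`-subspace of the polynomial ring containing every `f ∈ E`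
of total degree at most `d` and closed under multiplication by ring elements
as long as the degree stays at most `d`. -/
noncomputable def Vspace {k : Type*} [Field k] {σ : Type*} (E : Finset (MvPolynomial σ k)) (d : ℕ) :
    Submodule k (MvPolynomial σ k) :=
  sInf {W | (∀ f ∈ E, f.totalDegree ≤ d → f ∈ W) ∧
            ∀ g ∈ W, ∀ h : MvPolynomial σ k, (g * h).totalDegree ≤ d → g * h ∈ W}

/-! ### Auxiliary lemmas -/

section VspaceLemmas

variable {k : Type*} [Field k] {σ : Type*} {E : Finset (MvPolynomial σ k)} {d d' : ℕ}

lemma Vspace_gen {f : MvPolynomial σ k} (hf : f ∈ E) (hd : f.totalDegree ≤ d) :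
    f ∈ Vspace E d :=
  Submodule.mem_sInf.2 fun _ hW => hW.1 f hf hd

lemma Vspace_mul {g h : MvPolynomial σ k} (hg : g ∈ Vspace E d)
    (hd : (g * h).totalDegree ≤ d) : g * h ∈ Vspace E d :=
  Submodule.mem_sInf.2 fun W hW => hW.2 g (Submodule.mem_sInf.1 hg W hW) h hd

lemma Vspace_mono (h : d ≤ d') : Vspace E d ≤ Vspace E d' :=
  sInf_le ⟨fun f hf hd => Vspace_gen hf (hd.trans h),
    fun g hg h' hd => Vspace_mul hg (hd.trans h)⟩

end VspaceLemmas

/-- The value of an exponent vector: `Σ_j s_j q^j`. -/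
def valF (q : ℕ) {n : ℕ} (s : Fin n →₀ ℕ) : ℕ := ∑ j : Fin n, s j * q ^ (j : ℕ)

lemma valF_add (q : ℕ) {n : ℕ} (s t : Fin n →₀ ℕ) : valF q (s + t) = valF q s + valF q t := by
  simp [valF, Finsupp.add_apply, add_mul, Finset.sum_add_distrib]

lemma valF_single (q : ℕ) {n : ℕ} (j : Fin n) (c : ℕ) :
    valF q (Finsupp.single j c) = c * q ^ (j : ℕ) := by
  rw [valF, Finset.sum_eq_single j]
  · simp
  · intro b _ hb; rw [Finsupp.single_eq_of_ne' (Ne.symm hb), zero_mul]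
  · simp

section ReduceExp

variable {q n : ℕ}

lemma reduceExp_lt (hq : 2 ≤ q ^ n) (e : ℕ) : reduceExp q n e < q ^ n := by
  unfold reduceExp
  split_ifs with h1 h2
  · exact h1
  · omega
  · have : e % (q ^ n - 1) < q ^ n - 1 := Nat.mod_lt _ (by omega)
    omega

lemma reduceExp_modEq (e : ℕ) : reduceExp q n e ≡ e [MOD q ^ n - 1] := by
  unfold reduceExp
  split_ifs with h1 h2
  · rfl
  · show (q ^ n - 1) % (q ^ n - 1) = e % (q ^ n - 1)
    rw [Nat.mod_self, Nat.mod_eq_zero_of_dvd h2]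
  · exact Nat.mod_modEq e _

lemma reduceExp_eq_zero_iff (hq : 2 ≤ q ^ n) (e : ℕ) : reduceExp q n e = 0 ↔ e = 0 := by
  unfold reduceExp
  split_ifs with h1 h2
  · rfl
  · constructor
    · intro h; omega
    · intro h; omega
  · constructor
    · intro h; exact absurd (Nat.dvd_of_mod_eq_zero h) h2
    · intro h; omega

lemma reduceExp_congr (hq : 2 ≤ q ^ n) {a b : ℕ} (h : a ≡ b [MOD q ^ n - 1])
    (h0 : a = 0 ↔ b = 0) : reduceExp q n a = reduceExp q n b := by
  set M := q ^ n - 1 with hM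
  have hM1 : 1 ≤ M := by omega
  have hra : reduceExp q n a < q ^ n := reduceExp_lt hq a
  have hrb : reduceExp q n b < q ^ n := reduceExp_lt hq b
  have hab : reduceExp q n a ≡ reduceExp q n b [MOD M] :=
    ((reduceExp_modEq a).trans h).trans (reduceExp_modEq b).symm
  have hz : reduceExp q n a = 0 ↔ reduceExp q n b = 0 := by
    rw [reduceExp_eq_zero_iff hq, reduceExp_eq_zero_iff hq]; exact h0
  set ra := reduceExp q n a
  set rb := reduceExp q n b
  rcases eq_or_lt_of_le (show ra ≤ M by omega) with h1 | h1 <;>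
    rcases eq_or_lt_of_le (show rb ≤ M by omega) with h2 | h2
  · omega
  · have : ra % M = rb % M := hab
    rw [h1, Nat.mod_self, Nat.mod_eq_of_lt h2] at this
    omega
  · have : ra % M = rb % M := hab
    rw [h2, Nat.mod_self, Nat.mod_eq_of_lt h1] at this
    omega
  · have : ra % M = rb % M := hab
    rwa [Nat.mod_eq_of_lt h1, Nat.mod_eq_of_lt h2] at this

end ReduceExp

section ExpVec

variable {q n : ℕ}

lemma expVec_apply (q n e : ℕ) (j : Fin n) :
    expVec q n e j = reduceExp q n e / q ^ (j : ℕ) % q := by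
  simp [expVec]

lemma expVec_congr {x y : ℕ} (h : reduceExp q n x = reduceExp q n y) :
    expVec q n x = expVec q n y := by
  unfold expVec; rw [h]

lemma expVec_lt (hq : 2 ≤ q) (e : ℕ) (j : Fin n) : expVec q n e j < q := by
  rw [expVec_apply]
  exact Nat.mod_lt _ (by omega)

lemma finFunctionFinEquiv_symm_coe {m N : ℕ} (a : Fin (m ^ N)) (j : Fin N) :
    ((finFunctionFinEquiv.symm a) j : ℕ) = (a : ℕ) / m ^ (j : ℕ) % m := by
  simp [finFunctionFinEquiv, Equiv.ofRightInverseOfCardLE_symm_apply]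

lemma valF_expVec (hqn : 2 ≤ q ^ n) (e : ℕ) : valF q (expVec q n e) = reduceExp q n e := by
  set a : Fin (q ^ n) := ⟨reduceExp q n e, reduceExp_lt hqn e⟩ with ha
  have key : ∀ j : Fin n, expVec q n e j = ((finFunctionFinEquiv.symm a) j : ℕ) := by
    intro j
    rw [expVec_apply, finFunctionFinEquiv_symm_coe]
  calc valF q (expVec q n e) = ∑ j : Fin n, ((finFunctionFinEquiv.symm a) j : ℕ) * q ^ (j : ℕ) := by
        unfold valF; exact Finset.sum_congr rfl fun j _ => by rw [key j]
    _ = ((finFunctionFinEquiv (finFunctionFinEquiv.symm a)) : ℕ) := (finFunctionFinEquiv_apply _).symm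
    _ = reduceExp q n e := by rw [Equiv.apply_symm_apply]

lemma expVec_valF (hq : 2 ≤ q) {s : Fin n →₀ ℕ} (hs : ∀ j, s j < q) :
    expVec q n (valF q s) = s := by
  set f : Fin n → Fin q := fun j => ⟨s j, hs j⟩ with hf
  have hval : valF q s = (finFunctionFinEquiv f : ℕ) := by
    rw [finFunctionFinEquiv_apply]; rfl
  have hlt : valF q s < q ^ n := hval ▸ (finFunctionFinEquiv f).isLt
  have hred : reduceExp q n (valF q s) = valF q s := by
    unfold reduceExp; rw [if_pos hlt]
  ext j
  rw [expVec_apply, hred, hval, ← finFunctionFinEquiv_symm_coe, Equiv.symm_apply_apply]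

end ExpVec

section Reduction

variable {k : Type*} [Field k] [DecidableEq k] (q n : ℕ) [NeZero n] (F : Finset (Polynomial k))

lemma gen_mem (j : Fin n) :
    (X j ^ q - X (j + 1) : MvPolynomial (Fin n) k) ∈ fakeWeilSystem q n F :=
  Finset.mem_union_right _ (Finset.mem_image.2 ⟨j, Finset.mem_univ j, rfl⟩)

lemma gen_totalDegree (hq : 1 ≤ q) (j : Fin n) :
    (X j ^ q - X (j + 1) : MvPolynomial (Fin n) k).totalDegree ≤ q := by
  rw [sub_eq_add_neg]
  refine (totalDegree_add _ _).trans (max_le ?_ ?_)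
  · rw [totalDegree_X_pow]
  · rw [totalDegree_neg, totalDegree_X]; omega

/-- One carry step: replacing `q` in coordinate `j` by `1` in coordinate `j+1`. -/
lemma step_mem (hq : 2 ≤ q) {d : ℕ} {s : Fin n →₀ ℕ} {j : Fin n} (hsj : q ≤ s j)
    (hd : (s.sum fun _ e => e) ≤ d) :
    (monomial s (1 : k)) -
      monomial (s - Finsupp.single j q + Finsupp.single (j + 1) 1) 1 ∈
        Vspace (fakeWeilSystem q n F) d := by
  set t := s - Finsupp.single j q with htdef
  have hle : Finsupp.single j q ≤ s := Finsupp.single_le_iff.2 hsj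
  have hts : t + Finsupp.single j q = s := tsub_add_cancel_of_le hle
  have hsum : (s.sum fun _ e => e) = (t.sum fun _ e => e) + q := by
    rw [← hts, Finsupp.sum_add_index' (fun _ => rfl) (fun _ _ _ => rfl),
      Finsupp.sum_single_index rfl]
  have hqd : q ≤ d := by
    have hj : j ∈ s.support := Finsupp.mem_support_iff.2 (by omega)
    have : s j ≤ s.sum fun _ e => e :=
      Finset.single_le_sum (fun i _ => Nat.zero_le _) hj
    omega
  have hgen : (X j ^ q - X (j + 1) : MvPolynomial (Fin n) k) ∈
      Vspace (fakeWeilSystem q n F) d :=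
    Vspace_gen (gen_mem q n F j) ((gen_totalDegree q n (by omega) j).trans hqd)
  have hid : (X j ^ q - X (j + 1) : MvPolynomial (Fin n) k) * monomial t 1 =
      monomial s 1 - monomial (t + Finsupp.single (j + 1) 1) 1 := by
    rw [sub_mul, X_pow_eq_monomial, monomial_mul, one_mul,
      show (X (j + 1) : MvPolynomial (Fin n) k) = X (j + 1) ^ 1 from (pow_one _).symm,
      X_pow_eq_monomial, monomial_mul, one_mul, add_comm (Finsupp.single j q) t, hts,
      add_comm (Finsupp.single (j + 1) 1) t]
  have hdeg : ((X j ^ q - X (j + 1) : MvPolynomial (Fin n) k) * monomial t 1).totalDegree ≤ d := by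
    refine (totalDegree_mul _ _).trans ?_
    have h1 := gen_totalDegree (k := k) q n (by omega) j
    have h2 := totalDegree_monomial_le t (1 : k)
    have h3 : (t.sum fun _ => id) = (t.sum fun _ e => e) := rfl
    omega
  have := Vspace_mul hgen hdeg
  rwa [hid] at this

/-- Repeated carrying: a monomial is congruent to the monomial of the base-`q`
digit vector of (the reduction of) its value. -/
lemma reduce_mem (hq : 2 ≤ q) (d N : ℕ) :
    ∀ s : Fin n →₀ ℕ, (s.sum fun _ e => e) ≤ N → (s.sum fun _ e => e) ≤ d →
      monomial s (1 : k) - monomial (expVec q n (valF q s)) 1 ∈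
        Vspace (fakeWeilSystem q n F) d := by
  have hqn : 2 ≤ q ^ n := le_trans hq (Nat.le_self_pow (NeZero.ne n) q)
  induction N with
  | zero =>
    intro s hN _
    have hs : ∀ j, s j < q := by
      intro j
      have hj : s j ≤ s.sum fun _ e => e := by
        by_cases h : s j = 0
        · omega
        · exact Finset.single_le_sum (fun i _ => Nat.zero_le _) (Finsupp.mem_support_iff.2 h)
      omega
    rw [expVec_valF hq hs, sub_self]
    exact Submodule.zero_mem _
  | succ N ih =>
    intro s hN hd
    by_cases hred : ∀ j, s j < q
    · rw [expVec_valF hq hred, sub_self]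
      exact Submodule.zero_mem _
    · push_neg at hred
      obtain ⟨j, hj⟩ := hred
      replace hj : q ≤ s j := hj
      set t := s - Finsupp.single j q with htdef
      set s' := t + Finsupp.single (j + 1) 1 with hs'def
      have hle : Finsupp.single j q ≤ s := Finsupp.single_le_iff.2 hj
      have hts : t + Finsupp.single j q = s := tsub_add_cancel_of_le hle
      have hsum : (s.sum fun _ e => e) = (t.sum fun _ e => e) + q := by
        rw [← hts, Finsupp.sum_add_index' (fun _ => rfl) (fun _ _ _ => rfl),
          Finsupp.sum_single_index rfl]
      have hsum' : (s'.sum fun _ e => e) = (t.sum fun _ e => e) + 1 := by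
        rw [hs'def, Finsupp.sum_add_index' (fun _ => rfl) (fun _ _ _ => rfl),
          Finsupp.sum_single_index rfl]
      -- value congruence
      have hvs : valF q s = valF q t + q * q ^ (j : ℕ) := by
        rw [← hts, valF_add, valF_single]
      have hvs' : valF q s' = valF q t + q ^ (((j + 1 : Fin n)) : ℕ) := by
        rw [hs'def, valF_add, valF_single, one_mul]
      have hpow : q ^ (((j + 1 : Fin n)) : ℕ) ≡ q ^ ((j : ℕ) + 1) [MOD q ^ n - 1] := by
        have hval : (((j + 1 : Fin n)) : ℕ) = ((j : ℕ) + 1) % n := by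
          rw [Fin.val_add, Fin.val_one']
          conv_rhs => rw [Nat.add_mod]
          rw [Nat.mod_eq_of_lt j.isLt]
        rcases lt_or_eq_of_le (Nat.succ_le_of_lt j.isLt) with h | h
        · have h' : (j : ℕ) + 1 < n := h
          rw [hval, Nat.mod_eq_of_lt h']
        · have h' : (j : ℕ) + 1 = n := h
          rw [hval, h', Nat.mod_self, pow_zero]
          exact (Nat.modEq_iff_dvd' (Nat.one_le_iff_ne_zero.2 (by omega))).2 dvd_rfl

      have hcong : valF q s' ≡ valF q s [MOD q ^ n - 1] := by
        rw [hvs, hvs', ← pow_succ']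
        exact Nat.ModEq.add_left _ hpow
      have hzero : valF q s' = 0 ↔ valF q s = 0 := by
        have h1 : 0 < q ^ (((j + 1 : Fin n)) : ℕ) := Nat.pow_pos (by omega)
        have h2 : 0 < q * q ^ (j : ℕ) := Nat.mul_pos (by omega) (Nat.pow_pos (by omega))
        omega
      have hexp : expVec q n (valF q s) = expVec q n (valF q s') :=
        expVec_congr (reduceExp_congr hqn hcong hzero).symm
      have hstep : monomial s (1 : k) - monomial s' 1 ∈ Vspace (fakeWeilSystem q n F) d :=
        step_mem q n F hq hj hd
      have hih : monomial s' (1 : k) - monomial (expVec q n (valF q s')) 1 ∈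
          Vspace (fakeWeilSystem q n F) d := by
        refine ih s' (by omega) (by omega)
      have := Submodule.add_mem _ hstep hih
      rw [sub_add_sub_cancel, ← hexp] at this
      exact this

end Reduction

section RedMap

variable {k : Type*} [Field k] (q n : ℕ)

/-- The linear "reduction" map sending `monomial u c` to
`monomial (expVec q n (valF q u)) c`. -/
noncomputable def redMap : MvPolynomial (Fin n) k →ₗ[k] MvPolynomial (Fin n) k :=
  (Finsupp.lsum k fun u : Fin n →₀ ℕ => monomial (expVec q n (valF q u))) ∘ₗ
    (AddMonoidAlgebra.coeffLinearEquiv k).toLinearMap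

lemma redMap_monomial (u : Fin n →₀ ℕ) (c : k) :
    redMap q n (monomial u c) = monomial (expVec q n (valF q u)) c := by
  rw [← single_eq_monomial]
  exact Finsupp.lsum_single k _ _ _

end RedMap

section FakeWeilLemmas

variable {k : Type*} [Field k] (q n : ℕ)

lemma fakeWeil_add (f g : Polynomial k) :
    fakeWeil q n (f + g) = fakeWeil q n f + fakeWeil q n g :=
  Polynomial.sum_add_index f g _ (fun _ => map_zero _) (fun a b₁ b₂ => map_add _ _ _)

lemma fakeWeil_monomial (e : ℕ) (c : k) :
    fakeWeil q n (Polynomial.monomial e c) = monomial (expVec q n e) c :=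
  Polynomial.sum_monomial_index c _ (map_zero _)

lemma expVec_add_key [NeZero n] (hq : 2 ≤ q) (a b : ℕ) :
    expVec q n (valF q (expVec q n a + expVec q n b)) = expVec q n (a + b) := by
  have hqn : 2 ≤ q ^ n := le_trans hq (Nat.le_self_pow (NeZero.ne n) q)
  have hva := valF_expVec (q := q) (n := n) hqn a
  have hvb := valF_expVec (q := q) (n := n) hqn b
  have hsum : valF q (expVec q n a + expVec q n b) = reduceExp q n a + reduceExp q n b := by
    rw [valF_add, hva, hvb]
  have hcong : valF q (expVec q n a + expVec q n b) ≡ a + b [MOD q ^ n - 1] := by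
    rw [hsum]
    exact (reduceExp_modEq a).add (reduceExp_modEq b)
  have hzero : valF q (expVec q n a + expVec q n b) = 0 ↔ a + b = 0 := by
    rw [hsum]
    have ha := reduceExp_eq_zero_iff (q := q) (n := n) hqn a
    have hb := reduceExp_eq_zero_iff (q := q) (n := n) hqn b
    omega
  exact expVec_congr (reduceExp_congr hqn hcong hzero)

lemma fakeWeil_mul [NeZero n] (hq : 2 ≤ q) (f g : Polynomial k) :
    fakeWeil q n (f * g) = redMap q n (fakeWeil q n f * fakeWeil q n g) := by
  induction f using Polynomial.induction_on' with
  | add p r hp hr =>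
    rw [add_mul, fakeWeil_add, fakeWeil_add, add_mul, map_add, hp, hr]
  | monomial a c =>
    induction g using Polynomial.induction_on' with
    | add p r hp hr =>
      rw [mul_add, fakeWeil_add, fakeWeil_add, mul_add, map_add, hp, hr]
    | monomial b d =>
      rw [Polynomial.monomial_mul_monomial, fakeWeil_monomial, fakeWeil_monomial,
        fakeWeil_monomial, monomial_mul, redMap_monomial, expVec_add_key q n hq]

end FakeWeilLemmas

section SubRedMap

variable {k : Type*} [Field k] [DecidableEq k] (q n : ℕ) [NeZero n] (F : Finset (Polynomial k))

lemma sub_redMap_mem (hq : 2 ≤ q) (p : MvPolynomial (Fin n) k) :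
    p - redMap q n p ∈ Vspace (fakeWeilSystem q n F) p.totalDegree := by
  have hrep : p - redMap q n p = ∑ u ∈ p.support,
      (coeff u p • (monomial u (1 : k) - monomial (expVec q n (valF q u)) 1)) := by
    calc p - redMap q n p
        = (∑ u ∈ p.support, monomial u (coeff u p)) -
            redMap q n (∑ u ∈ p.support, monomial u (coeff u p)) := by rw [← p.as_sum]
      _ = ∑ u ∈ p.support,
            (monomial u (coeff u p) - monomial (expVec q n (valF q u)) (coeff u p)) := by
          rw [map_sum, ← Finset.sum_sub_distrib]
          exact Finset.sum_congr rfl fun u _ => by rw [redMap_monomial]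
      _ = _ := Finset.sum_congr rfl fun u _ => by
          rw [smul_sub, smul_monomial, smul_monomial, smul_eq_mul, mul_one]
  rw [hrep]
  refine Submodule.sum_mem _ fun u hu => Submodule.smul_mem _ _ ?_
  exact reduce_mem q n F hq p.totalDegree (u.sum fun _ e => e) u le_rfl (le_totalDegree hu)

end SubRedMap

/-- Additivity and multiplicativity of the fake Weil descent modulo the spaces `V_{E,d}`:
`overline{h_1 + h_2} ≡ overline{h_1} + overline{h_2}` in degree
`max(deg overline{h_1}, deg overline{h_2})`, and
`overline{h_1 h_2} ≡ overline{h_1} ⋅ overline{h_2}` in degree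
`deg overline{h_1} + deg overline{h_2}`. -/
theorem fakeWeil_add_mul_equiv {k : Type*} [Field k] [Fintype k] [DecidableEq k]
    (q n : ℕ) (hq : IsPrimePow q) [NeZero n] (hcard : Fintype.card k = q ^ n)
    (F : Finset (Polynomial k)) (h1 h2 : Polynomial k) :
    (fakeWeil q n (h1 + h2) - (fakeWeil q n h1 + fakeWeil q n h2) ∈
      Vspace (fakeWeilSystem q n F)
        (max (fakeWeil q n h1).totalDegree (fakeWeil q n h2).totalDegree)) ∧
    (fakeWeil q n (h1 * h2) - fakeWeil q n h1 * fakeWeil q n h2 ∈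
      Vspace (fakeWeilSystem q n F)
        ((fakeWeil q n h1).totalDegree + (fakeWeil q n h2).totalDegree)) := by
  have hq2 : 2 ≤ q := hq.two_le
  constructor
  · rw [fakeWeil_add, sub_self]
    exact Submodule.zero_mem _
  · set P := fakeWeil q n h1 * fakeWeil q n h2 with hP
    rw [fakeWeil_mul q n hq2, show redMap q n P - P = -(P - redMap q n P) from (neg_sub _ _).symm]
    exact Submodule.neg_mem _
      (Vspace_mono (totalDegree_mul _ _) (sub_redMap_mem q n F hq2 P))
end
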